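/- Let μ > 0 and define, for 0 < α_2 ≤ α_1 < ∞, ρ_1(α_1) = e^{−α_1}/(1 − α_1 e^{−α_1}) and f(α_1, α_2) = ( α_2²/2 + e^{−α_2}[α_2 + 1 + ρ_1(α_2² + 2α_2 + 2)] − e^{−α_1}[α_1 + 1 + ρ_1(α_1² + α_1 + 1)] ) / ( α_2 + e^{−α_2}[1 + ρ_1(α_2 + 1)] − e^{−α_1}[1 + ρ_1 α_1] ), so that the average age of the B = 2 monotone threshold policy with thresholds τ_i = α_i/μ is Δ̄(α_1, α_2) = f(α_1, α_2)/μ. If (α_1*, α_2*) with 0 < α_2* < α_1* < ∞ is a global minimizer of f over the region {(α_1, α_2) : 0 < α_2 ≤ α_1 < ∞}, then α_2* = f(α_1*, α_2*); equivalently, the optimal lower threshold satisfies τ_2* = Δ̄(α_1*, α_2*), the minimum average age. -/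

import Mathlib

/-- `ρ1(α1) = e^(-α1) / (1 - α1 e^(-α1))`, the stationary probability of the empty
post-update battery state for `B = 2`. -/
noncomputable def rho1 (a1 : ℝ) : ℝ := Real.exp (-a1) / (1 - a1 * Real.exp (-a1))

/-- `f(α1, α2)` is `μ` times the time-average age of the `B = 2` monotone threshold
policy with normalized thresholds `α1 = μ τ1 ≥ α2 = μ τ2` (Theorem 4 of the paper). -/
noncomputable def avgAgeB2 (a1 a2 : ℝ) : ℝ :=
  (a2 ^ 2 / 2
      + Real.exp (-a2) * (a2 + 1 + rho1 a1 * (a2 ^ 2 + 2 * a2 + 2))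
      - Real.exp (-a1) * (a1 + 1 + rho1 a1 * (a1 ^ 2 + a1 + 1)))
    / (a2 + Real.exp (-a2) * (1 + rho1 a1 * (a2 + 1))
      - Real.exp (-a1) * (1 + rho1 a1 * a1))

noncomputable def Nfun (r c x : ℝ) : ℝ :=
  x ^ 2 / 2 + Real.exp (-x) * (x + 1 + r * (x ^ 2 + 2 * x + 2)) - c

noncomputable def Dfun (r c x : ℝ) : ℝ :=
  x + Real.exp (-x) * (1 + r * (x + 1)) - c

lemma hasDerivAt_expNeg (x : ℝ) :
    HasDerivAt (fun x : ℝ => Real.exp (-x)) (-Real.exp (-x)) x := by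
  simpa using (hasDerivAt_neg x).exp

lemma hasDerivAt_Dfun (r c x : ℝ) :
    HasDerivAt (Dfun r c) (1 - Real.exp (-x) * (1 + r * x)) x := by
  have hp : HasDerivAt (fun x : ℝ => 1 + r * (x + 1)) r x := by
    simpa using ((((hasDerivAt_id x).add_const 1).const_mul r).const_add 1)
  have h := (((hasDerivAt_id x).add ((hasDerivAt_expNeg x).mul hp)).sub_const c)
  refine HasDerivAt.congr_deriv h ?_
  ring

lemma hasDerivAt_Nfun (r c x : ℝ) :
    HasDerivAt (Nfun r c) (x * (1 - Real.exp (-x) * (1 + r * x))) x := by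
  have hq : HasDerivAt (fun x : ℝ => x + 1 + r * (x ^ 2 + 2 * x + 2))
      (1 + r * (2 * x + 2)) x := by
    have h2 : HasDerivAt (fun x : ℝ => x ^ 2 + 2 * x + 2) (2 * x + 2) x := by
      have := ((hasDerivAt_pow 2 x).add (((hasDerivAt_id x).const_mul 2))).add_const 2
      refine HasDerivAt.congr_deriv this ?_
      ring
    exact (((hasDerivAt_id x).add_const 1).add (h2.const_mul r))
  have hsq : HasDerivAt (fun x : ℝ => x ^ 2 / 2) x x := by
    have := (hasDerivAt_pow 2 x).div_const 2
    refine HasDerivAt.congr_deriv this ?_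
    ring
  have h := ((hsq.add ((hasDerivAt_expNeg x).mul hq)).sub_const c)
  refine HasDerivAt.congr_deriv h ?_
  ring

/-- Theorem 3 of the paper, specialized to `B = 2` via the closed form of
Theorem 4: if `(α1*, α2*)` with `0 < α2* < α1* < ∞` is a global minimizer of
`f = avgAgeB2` over `{(α1, α2) : 0 < α2 ≤ α1 < ∞}`, then `α2* = f(α1*, α2*)`;
equivalently, the optimal lower threshold `τ2* = α2*/μ` equals the minimum average age
`Δ̄ = f(α1*, α2*)/μ`. -/
theorem optimal_full_battery_threshold_eq_min_age_B2 (μ : ℝ) (hμ : 0 < μ)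
    (a1 a2 : ℝ) (ha2 : 0 < a2) (ha12 : a2 < a1)
    (hmin : ∀ b1 b2 : ℝ, 0 < b2 → b2 ≤ b1 → avgAgeB2 a1 a2 ≤ avgAgeB2 b1 b2) :
    a2 = avgAgeB2 a1 a2 ∧ a2 / μ = avgAgeB2 a1 a2 / μ := by
  have ha1 : 0 < a1 := ha2.trans ha12
  set r := rho1 a1 with hr
  set C1 := Real.exp (-a1) * (a1 + 1 + r * (a1 ^ 2 + a1 + 1)) with hC1
  set C2 := Real.exp (-a1) * (1 + r * a1) with hC2
  have havg : ∀ x : ℝ, avgAgeB2 a1 x = Nfun r C1 x / Dfun r C2 x := by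
    intro x; simp [avgAgeB2, Nfun, Dfun, hr, hC1, hC2]
  -- basic facts about a1
  have hexp1 : 1 + a1 < Real.exp a1 := by
    have := Real.add_one_lt_exp (ne_of_gt ha1)
    linarith
  have hden : 0 < 1 - a1 * Real.exp (-a1) := by
    have h1 : a1 * Real.exp (-a1) < 1 := by
      rw [Real.exp_neg]
      rw [mul_inv_lt_iff₀ (Real.exp_pos a1)]
      linarith
    linarith
  have hrpos : 0 < r := by
    rw [hr, rho1]
    exact div_pos (Real.exp_pos _) hden
  have hrlt1 : r < 1 := by
    rw [hr, rho1, div_lt_one hden]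
    have : Real.exp (-a1) * (1 + a1) < 1 := by
      rw [Real.exp_neg]
      rw [inv_mul_lt_iff₀ (Real.exp_pos a1)]
      linarith
    nlinarith [Real.exp_pos (-a1)]
  have hreq : r * (1 - a1 * Real.exp (-a1)) = Real.exp (-a1) := by
    rw [hr, rho1]; field_simp
  -- D' positive on (0, ∞)
  have hDp : ∀ x : ℝ, 0 < x → 0 < 1 - Real.exp (-x) * (1 + r * x) := by
    intro x hx
    have h1 : Real.exp (-x) * (1 + x) < 1 := by
      rw [Real.exp_neg, inv_mul_lt_iff₀ (Real.exp_pos x)]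
      have := Real.add_one_lt_exp (ne_of_gt hx)
      linarith
    have h2 : Real.exp (-x) * (1 + r * x) < Real.exp (-x) * (1 + x) := by
      have : r * x < x := by nlinarith
      nlinarith [Real.exp_pos (-x)]
    linarith
  -- D(0) = 1
  have hD0 : Dfun r C2 0 = 1 := by
    simp [Dfun, hC2]
    nlinarith [hreq]
  -- D is strictly monotone on [0, ∞), hence D a2 > 0
  have hDderiv : ∀ x : ℝ, deriv (Dfun r C2) x = 1 - Real.exp (-x) * (1 + r * x) :=
    fun x => (hasDerivAt_Dfun r C2 x).deriv
  have hmono : StrictMonoOn (Dfun r C2) (Set.Icc 0 a2) := by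
    apply strictMonoOn_of_deriv_pos (convex_Icc 0 a2)
    · exact fun x _ => (hasDerivAt_Dfun r C2 x).continuousAt.continuousWithinAt
    · intro x hx
      rw [interior_Icc] at hx
      rw [hDderiv]
      exact hDp x hx.1
  have hDpos : 0 < Dfun r C2 a2 := by
    have := hmono (Set.left_mem_Icc.2 ha2.le) (Set.right_mem_Icc.2 ha2.le) ha2
    rw [hD0] at this
    linarith
  have hDne : Dfun r C2 a2 ≠ 0 := ne_of_gt hDpos
  -- derivative of the quotient at a2
  have hg : HasDerivAt (fun x => avgAgeB2 a1 x)
      ((a2 * (1 - Real.exp (-a2) * (1 + r * a2)) * Dfun r C2 a2 -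
        Nfun r C1 a2 * (1 - Real.exp (-a2) * (1 + r * a2))) / Dfun r C2 a2 ^ 2) a2 := by
    have := (hasDerivAt_Nfun r C1 a2).div (hasDerivAt_Dfun r C2 a2) hDne
    have heq : (fun x => avgAgeB2 a1 x) = fun x => Nfun r C1 x / Dfun r C2 x := by
      funext x; exact havg x
    rw [heq]
    exact this
  -- local minimum
  have hloc : IsLocalMin (fun x => avgAgeB2 a1 x) a2 := by
    filter_upwards [Ioo_mem_nhds ha2 ha12] with x hx
    exact hmin a1 x hx.1 hx.2.le
  have hderiv0 := hloc.deriv_eq_zero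
  rw [hg.deriv] at hderiv0
  have hnum : a2 * (1 - Real.exp (-a2) * (1 + r * a2)) * Dfun r C2 a2 =
      Nfun r C1 a2 * (1 - Real.exp (-a2) * (1 + r * a2)) := by
    have h2 : (Dfun r C2 a2) ^ 2 ≠ 0 := pow_ne_zero 2 hDne
    field_simp at hderiv0
    linarith
  have hDp2 := hDp a2 ha2
  have key : a2 * Dfun r C2 a2 = Nfun r C1 a2 := by
    have hne : (1 - Real.exp (-a2) * (1 + r * a2)) ≠ 0 := ne_of_gt hDp2
    have h : (a2 * Dfun r C2 a2 - Nfun r C1 a2) * (1 - Real.exp (-a2) * (1 + r * a2)) = 0 := by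
      have : (a2 * Dfun r C2 a2 - Nfun r C1 a2) * (1 - Real.exp (-a2) * (1 + r * a2)) =
          a2 * (1 - Real.exp (-a2) * (1 + r * a2)) * Dfun r C2 a2 -
            Nfun r C1 a2 * (1 - Real.exp (-a2) * (1 + r * a2)) := by ring
      rw [this, hnum, sub_self]
    rcases mul_eq_zero.1 h with h1 | h1
    · linarith
    · exact absurd h1 hne
  have hfinal : a2 = avgAgeB2 a1 a2 := by
    rw [havg a2, eq_div_iff hDne]
    linarith [key]
  exact ⟨hfinal, congrArg (· / μ) hfinal⟩
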